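/- Let g : E → ℤ/4ℤ be an H-form on a finite-dimensional ℤ/2-vector space E, with associated non-degenerate symmetric bilinear form C. Then E admits an orthonormal basis with respect to C, i.e. a basis e₁,…,eₙ satisfying C(eᵢ,eⱼ) = δᵢⱼ for all i,j. -/

import Mathlib

open Module

section Aux

variable {E : Type*} [AddCommGroup E] [Module (ZMod 2) E]

private lemma zmod2_ne_zero {a : ZMod 2} (h : a ≠ 0) : a = 1 := by revert h; revert a; decide

private lemma zmod2_ne_one {a : ZMod 2} (h : a ≠ 1) : a = 0 := by revert h; revert a; decide

private lemma restrict_nondeg_one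
    (C : E →ₗ[ZMod 2] E →ₗ[ZMod 2] ZMod 2)
    (hsymm : ∀ x y : E, C x y = C y x)
    (hnd : ∀ x : E, (∀ y : E, C x y = 0) → x = 0)
    (e : E) (he : C e e = 1)
    (w : E) (hw : C e w = 0)
    (h : ∀ y : E, C e y = 0 → C w y = 0) : w = 0 := by
  apply hnd
  intro x
  have hx' : C e (x - C e x • e) = 0 := by
    simp [map_sub, map_smul, he, smul_eq_mul]
  have h1 : C w (x - C e x • e) = 0 := h _ hx'
  have h2 : C w e = 0 := by rw [hsymm]; exact hw
  simp only [map_sub, map_smul, smul_eq_mul, h2, mul_zero, sub_zero] at h1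
  exact h1

private lemma restrict_nondeg_two
    (C : E →ₗ[ZMod 2] E →ₗ[ZMod 2] ZMod 2)
    (hsymm : ∀ x y : E, C x y = C y x)
    (hnd : ∀ x : E, (∀ y : E, C x y = 0) → x = 0)
    (e1 e2 : E) (h11 : C e1 e1 = 1) (h22 : C e2 e2 = 1) (h12 : C e1 e2 = 0)
    (w : E) (hw1 : C e1 w = 0) (hw2 : C e2 w = 0)
    (h : ∀ y : E, C e1 y = 0 → C e2 y = 0 → C w y = 0) : w = 0 := by
  apply hnd
  intro x
  have h21 : C e2 e1 = 0 := by rw [hsymm]; exact h12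
  have hx1 : C e1 (x - C e1 x • e1 - C e2 x • e2) = 0 := by
    simp [map_sub, map_smul, h11, h12, smul_eq_mul]
  have hx2 : C e2 (x - C e1 x • e1 - C e2 x • e2) = 0 := by
    simp [map_sub, map_smul, h21, h22, smul_eq_mul]
  have h1 : C w (x - C e1 x • e1 - C e2 x • e2) = 0 := h _ hx1 hx2
  have hwe1 : C w e1 = 0 := by rw [hsymm]; exact hw1
  have hwe2 : C w e2 = 0 := by rw [hsymm]; exact hw2
  simp only [map_sub, map_smul, smul_eq_mul, hwe1, hwe2, mul_zero, sub_zero] at h1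
  exact h1

private lemma cons_orthonormal {m : ℕ}
    (C : E →ₗ[ZMod 2] E →ₗ[ZMod 2] ZMod 2)
    (e : E) (he : C e e = 1) (v' : Fin m → E)
    (hev : ∀ i, C e (v' i) = 0) (hve : ∀ i, C (v' i) e = 0)
    (horth : ∀ i j, C (v' i) (v' j) = if i = j then 1 else 0) :
    ∀ i j, C ((Fin.cons e v' : Fin (m+1) → E) i) ((Fin.cons e v' : Fin (m+1) → E) j) = if i = j then 1 else 0 := by
  intro i j
  refine Fin.cases ?_ ?_ i
  · refine Fin.cases ?_ ?_ j
    · simp [he]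
    · intro j'
      simp [hev, (Fin.succ_ne_zero j').symm]
  · intro i'
    refine Fin.cases ?_ ?_ j
    · simp [hve, Fin.succ_ne_zero i']
    · intro j'
      simp only [Fin.cons_succ, horth, Fin.succ_inj]

/-- finrank of the kernel of the functional `C e` when `C e e = 1`. -/
private lemma finrank_ker_Ce [FiniteDimensional (ZMod 2) E]
    (C : E →ₗ[ZMod 2] E →ₗ[ZMod 2] ZMod 2) (e : E) (he : C e e = 1) :
    finrank (ZMod 2) (LinearMap.ker (C e)) + 1 = finrank (ZMod 2) E := by
  have hsurj : Function.Surjective (C e) := by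
    intro a
    exact ⟨a • e, by simp [map_smul, he, smul_eq_mul]⟩
  have h := LinearMap.finrank_range_add_finrank_ker (C e)
  rw [LinearMap.range_eq_top.mpr hsurj, finrank_top, finrank_self] at h
  omega

end Aux

/-- Main induction: a nondegenerate symmetric bilinear form over `ZMod 2` admitting a vector
of "norm" one admits a full orthonormal family. -/
private lemma aux_orthonormal :
    ∀ (n : ℕ) (E : Type u) [AddCommGroup E] [Module (ZMod 2) E]
      [FiniteDimensional (ZMod 2) E]
      (C : E →ₗ[ZMod 2] E →ₗ[ZMod 2] ZMod 2),
    (∀ x y : E, C x y = C y x) →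
    (∀ x : E, (∀ y : E, C x y = 0) → x = 0) →
    finrank (ZMod 2) E = n →
    (∃ e : E, C e e = 1) →
    ∃ v : Fin n → E, ∀ i j, C (v i) (v j) = if i = j then 1 else 0 := by
  intro n
  induction n using Nat.strong_induction_on with
  | _ n IH =>
  intro E _ _ _ C hsymm hnd hrank ⟨e, he⟩
  rcases n with _ | m
  · exact ⟨fun i => i.elim0, fun i => i.elim0⟩
  -- the orthogonal complement of e
  have hkerrank : finrank (ZMod 2) (LinearMap.ker (C e)) = m := by
    have := finrank_ker_Ce C e he
    omega
  by_cases hW : ∃ w : E, C e w = 0 ∧ C w w = 1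
  · -- the restriction to e^⊥ is non-alternating: recurse on e^⊥
    obtain ⟨w0, hw0e, hw0⟩ := hW
    set W := LinearMap.ker (C e) with hWdef
    let C' : W →ₗ[ZMod 2] W →ₗ[ZMod 2] ZMod 2 := C.compl₁₂ W.subtype W.subtype
    have hC'symm : ∀ x y : W, C' x y = C' y x := fun x y => hsymm x y
    have hC'nd : ∀ x : W, (∀ y : W, C' x y = 0) → x = 0 := by
      intro x hx
      have : (x : E) = 0 := by
        refine restrict_nondeg_one C hsymm hnd e he x (LinearMap.mem_ker.mp x.2) ?_
        intro y hy
        exact hx ⟨y, LinearMap.mem_ker.mpr hy⟩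
      exact Subtype.ext this
    obtain ⟨v', hv'⟩ := IH m (by omega) W C' hC'symm hC'nd hkerrank
      ⟨⟨w0, LinearMap.mem_ker.mpr hw0e⟩, hw0⟩
    refine ⟨Fin.cons e (fun i => (v' i : E)), ?_⟩
    refine cons_orthonormal C e he _ ?_ ?_ hv'
    · intro i; exact LinearMap.mem_ker.mp (v' i).2
    · intro i; rw [hsymm]; exact LinearMap.mem_ker.mp (v' i).2
  · -- the restriction to e^⊥ is alternating
    push_neg at hW
    have halt : ∀ w : E, C e w = 0 → C w w = 0 := fun w hw => zmod2_ne_one (hW w hw)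
    rcases m with _ | k
    · -- dimension 1
      refine ⟨fun _ => e, ?_⟩
      intro i j
      have : i = j := Fin.ext (by omega)
      simp [this, he]
    -- dimension ≥ 2 : find a hyperbolic pair u, v0 in e^⊥
    have hkerne : LinearMap.ker (C e) ≠ ⊥ := by
      intro h
      rw [h, finrank_bot] at hkerrank
      omega
    obtain ⟨u, huW, hune⟩ := Submodule.ne_bot_iff _ |>.mp hkerne
    have hue : C e u = 0 := LinearMap.mem_ker.mp huW
    have hv0 : ∃ y : E, C e y = 0 ∧ C u y ≠ 0 := by
      by_contra h
      push_neg at h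
      exact hune (restrict_nondeg_one C hsymm hnd e he u hue h)
    obtain ⟨v0, hv0e, hv0u⟩ := hv0
    have huv : C u v0 = 1 := zmod2_ne_zero hv0u
    have hvu : C v0 u = 1 := by rw [hsymm]; exact huv
    have huu : C u u = 0 := halt u hue
    have hvv : C v0 v0 = 0 := halt v0 hv0e
    have hueu : C u e = 0 := by rw [hsymm]; exact hue
    have hv0eu : C v0 e = 0 := by rw [hsymm]; exact hv0e
    set e1 := e + u with he1def
    set e2 := e + v0 with he2def
    set f := e + u + v0 with hfdef
    have h11 : C e1 e1 = 1 := by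
      simp only [he1def, map_add, LinearMap.add_apply, he, hue, hueu, huu]; decide
    have h22 : C e2 e2 = 1 := by
      simp only [he2def, map_add, LinearMap.add_apply, he, hv0e, hv0eu, hvv]; decide
    have h12 : C e1 e2 = 0 := by
      simp only [he1def, he2def, map_add, LinearMap.add_apply, he, hue, hueu, hv0e, huv]; decide
    have h21 : C e2 e1 = 0 := by rw [hsymm]; exact h12
    have h1f : C e1 f = 0 := by
      simp only [he1def, hfdef, map_add, LinearMap.add_apply, he, hue, hueu, huu, hv0e, huv]
      decide
    have h2f : C e2 f = 0 := by
      simp only [he2def, hfdef, map_add, LinearMap.add_apply, he, hue, hv0eu, hvv, hv0e, hvu]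
      decide
    have hff : C f f = 1 := by
      simp only [hfdef, map_add, LinearMap.add_apply, he, hue, hueu, huu, hv0e, hv0eu, hvv,
        huv, hvu]
      decide
    -- the orthogonal complement of {e1, e2}
    set φ : E →ₗ[ZMod 2] ZMod 2 × ZMod 2 := (C e1).prod (C e2) with hφdef
    have hφsurj : Function.Surjective φ := by
      rintro ⟨a, b⟩
      refine ⟨a • e1 + b • e2, ?_⟩
      simp [hφdef, LinearMap.prod_apply, map_add, map_smul, h11, h12, h21, h22, smul_eq_mul,
        Prod.ext_iff]
    have hW2rank : finrank (ZMod 2) (LinearMap.ker φ) = k := by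
      have h := LinearMap.finrank_range_add_finrank_ker φ
      rw [LinearMap.range_eq_top.mpr hφsurj, finrank_top] at h
      have h2 : finrank (ZMod 2) (ZMod 2 × ZMod 2) = 2 := by
        rw [Module.finrank_prod, finrank_self]
      omega
    have hmemW2 : ∀ x : E, x ∈ LinearMap.ker φ ↔ C e1 x = 0 ∧ C e2 x = 0 := by
      intro x
      simp [hφdef, LinearMap.mem_ker, LinearMap.prod_apply, Prod.ext_iff, Pi.prod]
    set W2 := LinearMap.ker φ with hW2def
    let C'' : W2 →ₗ[ZMod 2] W2 →ₗ[ZMod 2] ZMod 2 := C.compl₁₂ W2.subtype W2.subtype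
    have hC''symm : ∀ x y : W2, C'' x y = C'' y x := fun x y => hsymm x y
    have hC''nd : ∀ x : W2, (∀ y : W2, C'' x y = 0) → x = 0 := by
      intro x hx
      have hx12 := (hmemW2 x).mp x.2
      have : (x : E) = 0 := by
        refine restrict_nondeg_two C hsymm hnd e1 e2 h11 h22 h12 x hx12.1 hx12.2 ?_
        intro y hy1 hy2
        exact hx ⟨y, (hmemW2 y).mpr ⟨hy1, hy2⟩⟩
      exact Subtype.ext this
    obtain ⟨v', hv'⟩ := IH k (by omega) W2 C'' hC''symm hC''nd hW2rank
      ⟨⟨f, (hmemW2 f).mpr ⟨h1f, h2f⟩⟩, hff⟩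
    have hv'1 : ∀ i, C e1 (v' i : E) = 0 := fun i => ((hmemW2 _).mp (v' i).2).1
    have hv'2 : ∀ i, C e2 (v' i : E) = 0 := fun i => ((hmemW2 _).mp (v' i).2).2
    refine ⟨Fin.cons e1 (Fin.cons e2 (fun i => (v' i : E))), ?_⟩
    refine cons_orthonormal C e1 h11 _ ?_ ?_ ?_
    · intro i
      refine Fin.cases ?_ ?_ i
      · simpa using h12
      · intro i'; simpa using hv'1 i'
    · intro i
      refine Fin.cases ?_ ?_ i
      · simpa using h21
      · intro i'
        simp only [Fin.cons_succ]
        rw [hsymm]; exact hv'1 i'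
    · refine cons_orthonormal C e2 h22 _ hv'2 ?_ hv'
      intro i; rw [hsymm]; exact hv'2 i

/-- existence of an orthonormal basis for the bilinear form of an H-form. -/
theorem hform_orthonormal_basis {E : Type*} [AddCommGroup E] [Module (ZMod 2) E]
    [FiniteDimensional (ZMod 2) E]
    (C : E →ₗ[ZMod 2] E →ₗ[ZMod 2] ZMod 2) (g : E → ZMod 4)
    (hsymm : ∀ x y : E, C x y = C y x)
    (hnd : ∀ x : E, (∀ y : E, C x y = 0) → x = 0)
    (hadd : ∀ x y : E, g (x + y) = g x + g y + 2 * ((C x y).val : ZMod 4))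
    (hodd : ∃ x : E, g x = 1 ∨ g x = 3) :
    ∃ b : Basis (Fin (Module.finrank (ZMod 2) E)) (ZMod 2) E,
      ∀ i j, C (b i) (b j) = if i = j then 1 else 0 := by
  obtain ⟨x, hx⟩ := hodd
  -- g 0 = 0
  have hg0 : g 0 = 0 := by
    have := hadd 0 0
    simp only [add_zero, map_zero, LinearMap.zero_apply, ZMod.val_zero, Nat.cast_zero,
      mul_zero] at this
    exact left_eq_add.mp this
  -- x + x = 0
  have hxx0 : x + x = 0 := by
    have h2 : (2 : ZMod 2) • x = x + x := two_smul _ x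
    have : (2 : ZMod 2) = 0 := by decide
    rw [this, zero_smul] at h2
    exact h2.symm
  -- C x x = 1
  have hCxx : C x x = 1 := by
    have heq := hadd x x
    rw [hxx0, hg0] at heq
    by_contra h
    have hC0 : C x x = 0 := zmod2_ne_one h
    rw [hC0] at heq
    simp only [ZMod.val_zero, Nat.cast_zero, mul_zero, add_zero] at heq
    rcases hx with h1 | h1 <;> rw [h1] at heq <;> exact absurd heq (by decide)
  have hxne : x ≠ 0 := by
    intro h
    rw [h] at hCxx
    simp only [map_zero, LinearMap.zero_apply] at hCxx
    exact absurd hCxx (by decide)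
  haveI : Nontrivial E := nontrivial_of_ne x 0 hxne
  have hpos : 0 < finrank (ZMod 2) E := finrank_pos
  obtain ⟨v, hv⟩ := aux_orthonormal (finrank (ZMod 2) E) E C hsymm hnd rfl ⟨x, hCxx⟩
  have hli : LinearIndependent (ZMod 2) v := by
    rw [Fintype.linearIndependent_iff]
    intro gc hsum i
    have h0 : C (∑ j, gc j • v j) (v i) = 0 := by rw [hsum]; simp
    rw [map_sum] at h0
    simp only [map_smul, LinearMap.sum_apply, LinearMap.smul_apply, smul_eq_mul, hv] at h0
    simpa [mul_ite, Finset.sum_ite_eq'] using h0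
  haveI : Nonempty (Fin (finrank (ZMod 2) E)) := ⟨⟨0, hpos⟩⟩
  refine ⟨basisOfLinearIndependentOfCardEqFinrank hli (by simp), ?_⟩
  intro i j
  rw [coe_basisOfLinearIndependentOfCardEqFinrank]
  exact hv i j
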